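/- Let (A_i)_{i∈I} be a POVM on a finite-dimensional complex Hilbert space H (a finite family of positive semidefinite operators with Σ_i A_i = I), measured via the Lüders channel Φ_L(ρ) = Σ_i A_i^{1/2} ρ A_i^{1/2}, where A_i^{1/2} is the positive square root of A_i. For a unit vector ψ, Σ_i A_i^{1/2} |ψ⟩⟨ψ| A_i^{1/2} = |ψ⟩⟨ψ| if and only if ψ is a common eigenvector of all the operators A_i, i.e. for every i there exists a scalar λ_i with A_i ψ = λ_i ψ. -/

import Mathlib

open Matrix
open scoped ComplexOrder

noncomputable def Matrix.PosSemidef.sqrt {n : Type*} [Fintype n] [DecidableEq n]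
    {𝕜 : Type*} [RCLike 𝕜] {A : Matrix n n 𝕜} (hA : A.PosSemidef) : Matrix n n 𝕜 :=
  (hA.1.eigenvectorUnitary : Matrix n n 𝕜) * diagonal (((↑) : ℝ → 𝕜) ∘ (√·) ∘ hA.1.eigenvalues) *
    (star hA.1.eigenvectorUnitary : Matrix n n 𝕜)

private lemma Matrix.PosSemidef.sqrt_mul_self {n : Type*} [Fintype n] [DecidableEq n]
    {𝕜 : Type*} [RCLike 𝕜] {A : Matrix n n 𝕜} (hA : A.PosSemidef) : hA.sqrt * hA.sqrt = A := by
  have hU : (star hA.1.eigenvectorUnitary : Matrix n n 𝕜) * (hA.1.eigenvectorUnitary : Matrix n n 𝕜) = 1 :=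
    Unitary.coe_star_mul_self _
  conv_rhs => rw [hA.1.spectral_theorem, Unitary.conjStarAlgAut_apply]
  simp only [Matrix.PosSemidef.sqrt]
  rw [show ∀ a b c d e f : Matrix n n 𝕜, a * b * c * (d * e * f) = a * (b * (c * d) * e) * f by
    intros; simp only [Matrix.mul_assoc], hU, Matrix.mul_one, diagonal_mul_diagonal]
  congr 3
  funext i
  simp only [Function.comp_apply, ← RCLike.ofReal_mul, Real.mul_self_sqrt (hA.eigenvalues_nonneg i)]

private lemma Matrix.PosSemidef.posSemidef_sqrt {n : Type*} [Fintype n] [DecidableEq n]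
    {𝕜 : Type*} [RCLike 𝕜] {A : Matrix n n 𝕜} (hA : A.PosSemidef) : hA.sqrt.PosSemidef := by
  unfold Matrix.PosSemidef.sqrt
  rw [star_eq_conjTranspose]
  refine (PosSemidef.diagonal ?_).mul_mul_conjTranspose_same _
  intro i
  simp only [Pi.zero_apply, Function.comp_apply]
  exact_mod_cast Real.sqrt_nonneg _

private lemma conj_vecMulVec {n : ℕ} (B : Matrix (Fin n) (Fin n) ℂ) (hB : B.IsHermitian)
    (ψ : Fin n → ℂ) :
    B * vecMulVec ψ (star ψ) * B = vecMulVec (B *ᵥ ψ) (star (B *ᵥ ψ)) := by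
  ext i j
  simp only [mul_apply, vecMulVec_apply, mulVec, dotProduct, Pi.star_apply, star_sum, star_mul',
    Finset.sum_mul, Finset.mul_sum]
  refine Finset.sum_congr rfl fun l _ => Finset.sum_congr rfl fun k _ => ?_
  rw [show B l j = star (B j l) from hB.apply l j ▸ rfl]
  ring

private lemma sum_mulVec' {n : ℕ} {I : Type*} [Fintype I] (M : I → Matrix (Fin n) (Fin n) ℂ)
    (ψ : Fin n → ℂ) : (∑ i, M i) *ᵥ ψ = ∑ i, M i *ᵥ ψ := by
  ext j
  simp only [mulVec, dotProduct, Finset.sum_apply, Matrix.sum_apply, Finset.sum_mul]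
  exact Finset.sum_comm

private lemma dotProduct_sum' {n : ℕ} {I : Type*} [Fintype I] (v : Fin n → ℂ)
    (w : I → Fin n → ℂ) : v ⬝ᵥ (∑ i, w i) = ∑ i, v ⬝ᵥ w i := by
  simp only [dotProduct, Finset.sum_apply, Finset.mul_sum]
  exact Finset.sum_comm

private lemma vecMulVec_mulVec' {n : ℕ} (u v x : Fin n → ℂ) :
    vecMulVec u v *ᵥ x = (v ⬝ᵥ x) • u := by
  ext j
  simp only [mulVec, dotProduct, vecMulVec_apply, Pi.smul_apply, smul_eq_mul, Finset.sum_mul,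
    Finset.mul_sum]
  exact Finset.sum_congr rfl fun k _ => by ring

/-- The key eigenvector transfer: if `ψ` is an eigenvector of a PSD matrix `A`, it is an
eigenvector of `√A` with eigenvalue the real square root. -/
private lemma sqrt_eigenvector {n : ℕ} {A : Matrix (Fin n) (Fin n) ℂ} (hA : A.PosSemidef)
    {ψ : Fin n → ℂ} {lam : ℂ} (hψ : star ψ ⬝ᵥ ψ = 1) (h : A *ᵥ ψ = lam • ψ) :
    ∃ s : ℂ, s * star s = lam ∧ hA.sqrt *ᵥ ψ = s • ψ := by
  have hlam_eq : lam = star ψ ⬝ᵥ (A *ᵥ ψ) := by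
    rw [h, dotProduct_smul, hψ, smul_eq_mul, mul_one]
  have hlam_nonneg : 0 ≤ lam := hlam_eq ▸ hA.dotProduct_mulVec_nonneg ψ
  obtain ⟨hre, him⟩ := Complex.nonneg_iff.mp hlam_nonneg
  have hlam_real : (lam.re : ℂ) = lam := Complex.ext (by simp) (by simp [him])
  set B := hA.sqrt with hBdef
  have hBB : B *ᵥ (B *ᵥ ψ) = lam • ψ := by
    rw [mulVec_mulVec, hA.sqrt_mul_self, h]
  have hBherm : B.IsHermitian := hA.posSemidef_sqrt.1
  have hnorm : star (B *ᵥ ψ) ⬝ᵥ (B *ᵥ ψ) = lam := by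
    rw [star_mulVec, ← dotProduct_mulVec, hBherm, hBB, dotProduct_smul, hψ, smul_eq_mul, mul_one]
  rcases eq_or_lt_of_le hre with h0 | hpos
  · -- lam = 0
    refine ⟨0, by rw [← hlam_real, ← h0]; simp, ?_⟩
    have : star (B *ᵥ ψ) ⬝ᵥ (B *ᵥ ψ) = 0 := by rw [hnorm, ← hlam_real, ← h0]; simp
    rw [dotProduct_star_self_eq_zero.mp this]
    simp
  · -- lam > 0
    set s : ℂ := (Real.sqrt lam.re : ℂ) with hsdef
    have hs_sq : s * s = lam := by
      rw [hsdef, ← Complex.ofReal_mul, Real.mul_self_sqrt (le_of_lt hpos), hlam_real]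
    have hs_star : star s = s := by simp [hsdef]
    refine ⟨s, by rw [hs_star, hs_sq], ?_⟩
    set u : Fin n → ℂ := B *ᵥ ψ - s • ψ with hudef
    have hBu : (B *ᵥ u) + s • u = 0 := by
      rw [hudef, mulVec_sub, mulVec_smul, hBB, smul_sub, smul_smul, hs_sq]
      abel
    have hkey : star u ⬝ᵥ (B *ᵥ u) + s * (star u ⬝ᵥ u) = 0 := by
      have := congrArg (fun v => star u ⬝ᵥ v) hBu
      simpa [dotProduct_add, dotProduct_smul, dotProduct_zero, smul_eq_mul] using this
    have h1 : (0 : ℂ) ≤ star u ⬝ᵥ (B *ᵥ u) := hA.posSemidef_sqrt.dotProduct_mulVec_nonneg u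
    have h2 : (0 : ℂ) ≤ star u ⬝ᵥ u := dotProduct_star_self_nonneg u
    have hs_pos : (0 : ℂ) < s := by
      rw [hsdef]
      simp only [Complex.lt_def]
      constructor
      · simpa using Real.sqrt_pos.mpr hpos
      · simp
    have hsu : s * (star u ⬝ᵥ u) = 0 := by
      have hle : s * (star u ⬝ᵥ u) ≤ 0 := by
        have : s * (star u ⬝ᵥ u) = -(star u ⬝ᵥ (B *ᵥ u)) := by linear_combination hkey
        rw [this]
        exact neg_nonpos.mpr h1
      have hge : 0 ≤ s * (star u ⬝ᵥ u) := mul_nonneg (le_of_lt hs_pos) h2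
      exact le_antisymm hle hge
    have hu0 : u = 0 := by
      rcases mul_eq_zero.mp hsu with hc | hc
      · exact absurd hc (ne_of_gt hs_pos)
      · exact dotProduct_star_self_eq_zero.mp hc
    have := sub_eq_zero.mp (hudef ▸ hu0)
    exact this

theorem zero_disturbance_lueders {n : ℕ} {I : Type*} [Fintype I]
    (A : I → Matrix (Fin n) (Fin n) ℂ)
    (hA : ∀ i, (A i).PosSemidef)
    (hsum : ∑ i, A i = 1)
    (ψ : Fin n → ℂ) (hψ : star ψ ⬝ᵥ ψ = 1) :
    (∑ i, (hA i).sqrt * vecMulVec ψ (star ψ) * (hA i).sqrt = vecMulVec ψ (star ψ)) ↔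
      ∀ i, ∃ lam : ℂ, (A i) *ᵥ ψ = lam • ψ := by
  set B : I → Matrix (Fin n) (Fin n) ℂ := fun i => (hA i).sqrt with hBdef
  have hBherm : ∀ i, (B i).IsHermitian := fun i => (hA i).posSemidef_sqrt.1
  have hterm : ∀ i, B i * vecMulVec ψ (star ψ) * B i
      = vecMulVec (B i *ᵥ ψ) (star (B i *ᵥ ψ)) := fun i => conj_vecMulVec _ (hBherm i) ψ
  set w : I → Fin n → ℂ := fun i => B i *ᵥ ψ with hwdef
  set c : I → ℂ := fun i => star ψ ⬝ᵥ w i with hcdef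
  have hnorm : ∀ i, star (w i) ⬝ᵥ w i = star ψ ⬝ᵥ (A i *ᵥ ψ) := by
    intro i
    rw [hwdef]
    show star (B i *ᵥ ψ) ⬝ᵥ (B i *ᵥ ψ) = _
    rw [star_mulVec, ← dotProduct_mulVec, hBherm i, mulVec_mulVec, (hA i).sqrt_mul_self]
  have hnorm_sum : ∑ i, star (w i) ⬝ᵥ w i = 1 := by
    simp_rw [hnorm, ← dotProduct_sum', ← sum_mulVec', hsum, one_mulVec, hψ]
  constructor
  · intro h
    simp_rw [show ∀ i, (hA i).sqrt * vecMulVec ψ (star ψ) * (hA i).sqrt = _ from hterm] at h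
    -- apply ⟨ψ|·|ψ⟩ to both sides
    have hc_sum : ∑ i, c i * star (c i) = 1 := by
      have := congrArg (fun M => star ψ ⬝ᵥ (M *ᵥ ψ)) h
      simp only [sum_mulVec', dotProduct_sum', vecMulVec_mulVec', dotProduct_smul,
        smul_eq_mul] at this
      rw [hψ, mul_one] at this
      calc ∑ i, c i * star (c i) = ∑ i, star (w i) ⬝ᵥ ψ * (star ψ ⬝ᵥ w i) := by
            refine Finset.sum_congr rfl fun i _ => ?_
            rw [hcdef]
            have : star (w i) ⬝ᵥ ψ = star (star ψ ⬝ᵥ w i) := by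
              rw [star_dotProduct]
            rw [this]; ring
        _ = 1 := this
    have hdiff : ∀ i, star (w i - c i • ψ) ⬝ᵥ (w i - c i • ψ)
        = star (w i) ⬝ᵥ w i - c i * star (c i) := by
      intro i
      have hwψ : star (w i) ⬝ᵥ ψ = star (c i) := by
        rw [hcdef]
        show star (w i) ⬝ᵥ ψ = star (star ψ ⬝ᵥ w i)
        rw [star_dotProduct]
      simp only [star_sub, star_smul, sub_dotProduct, dotProduct_sub, smul_dotProduct,
        dotProduct_smul, smul_eq_mul, hψ, hwψ]
      rw [hcdef]
      ring
    have hsum0 : ∑ i, star (w i - c i • ψ) ⬝ᵥ (w i - c i • ψ) = 0 := by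
      simp_rw [hdiff, Finset.sum_sub_distrib, hnorm_sum, hc_sum, sub_self]
    have hzero : ∀ i ∈ Finset.univ, star (w i - c i • ψ) ⬝ᵥ (w i - c i • ψ) = 0 := by
      rw [← Finset.sum_eq_zero_iff_of_nonneg
        (fun i _ => dotProduct_star_self_nonneg (w i - c i • ψ))]
      exact hsum0
    intro i
    have hwi : w i = c i • ψ :=
      sub_eq_zero.mp (dotProduct_star_self_eq_zero.mp (hzero i (Finset.mem_univ i)))
    refine ⟨c i * c i, ?_⟩
    have : A i *ᵥ ψ = B i *ᵥ (B i *ᵥ ψ) := by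
      rw [mulVec_mulVec, (hA i).sqrt_mul_self]
    rw [this, show B i *ᵥ ψ = w i from rfl, hwi, mulVec_smul,
      show B i *ᵥ ψ = w i from rfl, hwi, smul_smul]
  · intro h
    have hlam : ∀ i, ∃ s : ℂ, s * star s = star ψ ⬝ᵥ (A i *ᵥ ψ) ∧ w i = s • ψ := by
      intro i
      obtain ⟨lam, hl⟩ := h i
      obtain ⟨s, hs1, hs2⟩ := sqrt_eigenvector (hA i) hψ hl
      refine ⟨s, ?_, hs2⟩
      rw [hs1, hl, dotProduct_smul, hψ, smul_eq_mul, mul_one]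
    simp_rw [show ∀ i, (hA i).sqrt * vecMulVec ψ (star ψ) * (hA i).sqrt = _ from hterm]
    have : ∀ i, vecMulVec (w i) (star (w i)) = (star ψ ⬝ᵥ (A i *ᵥ ψ)) • vecMulVec ψ (star ψ) := by
      intro i
      obtain ⟨s, hs1, hs2⟩ := hlam i
      rw [hs2, ← hs1]
      ext a b
      simp only [vecMulVec_apply, Pi.smul_apply, Pi.star_apply, smul_eq_mul, Matrix.smul_apply,
        star_mul']
      ring
    show ∑ i, vecMulVec (w i) (star (w i)) = vecMulVec ψ (star ψ)
    simp_rw [this, ← Finset.sum_smul]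
    have : ∑ i, star ψ ⬝ᵥ (A i *ᵥ ψ) = 1 := by
      simp_rw [← dotProduct_sum', ← sum_mulVec', hsum, one_mulVec, hψ]
    rw [this, one_smul]
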